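/- Let S be a monoid and let (T, F) be a torsion theory of S-acts. Then there exists a Kurosh-Amitsur radical r of S-acts with radical class R_r = T and semisimple class S_r = F. -/

import Mathlib

universe u

/-- A (left) `S`-act: a type equipped with a monoid action of `S`. -/
structure SAct (S : Type u) [Monoid S] where
  carrier : Type u
  [mulAction : MulAction S carrier]

attribute [instance] SAct.mulAction

namespace SAct

variable {S : Type u} [Monoid S]

/-- A homomorphism of `S`-acts. -/
def IsHom (A B : SAct S) (f : A.carrier → B.carrier) : Prop :=
  ∀ (s : S) (a : A.carrier), f (s • a) = s • f a

/-- A homomorphism is trivial if its image has at most one element. -/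
def IsTrivialHom {A B : SAct S} (f : A.carrier → B.carrier) : Prop :=
  (Set.range f).Subsingleton

/-- Two `S`-acts are isomorphic if there is a bijective homomorphism between them. -/
def AreIso (A B : SAct S) : Prop :=
  ∃ f : A.carrier → B.carrier, IsHom A B f ∧ Function.Bijective f

/-- A subset of an `S`-act is a subact if it is closed under the action. -/
def IsSubact (A : SAct S) (B : Set A.carrier) : Prop :=
  ∀ (s : S), ∀ a ∈ B, s • a ∈ B

/-- The `S`-act induced on a subact. -/
def sub (A : SAct S) (B : Set A.carrier) (h : IsSubact A B) : SAct S where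
  carrier := ↥B
  mulAction :=
    { smul := fun s b => ⟨s • (b : A.carrier), h s b b.2⟩
      one_smul := fun b => Subtype.ext (one_smul S (b : A.carrier))
      mul_smul := fun s t b => Subtype.ext (mul_smul s t (b : A.carrier)) }

/-- A congruence on an `S`-act: an equivalence relation compatible with the action. -/
def IsActCon (A : SAct S) (ρ : Setoid A.carrier) : Prop :=
  ∀ (s : S) (a a' : A.carrier), ρ a a' → ρ (s • a) (s • a')

/-- The quotient `S`-act of an `S`-act by a congruence. -/
def quot (A : SAct S) (ρ : Setoid A.carrier) (h : IsActCon A ρ) : SAct S where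
  carrier := Quotient ρ
  mulAction :=
    { smul := fun s => Quotient.map (fun a => s • a) (fun a b hab => h s a b hab)
      one_smul := fun q => Quotient.inductionOn q (fun a => by
        show Quotient.map (fun a => (1 : S) • a) _ (Quotient.mk ρ a) = Quotient.mk ρ a
        rw [Quotient.map_mk, one_smul])
      mul_smul := fun s t q => Quotient.inductionOn q (fun a => by
        show Quotient.map (fun a => (s * t) • a) _ (Quotient.mk ρ a)
            = Quotient.map (fun a => s • a) _ (Quotient.map (fun a => t • a) _ (Quotient.mk ρ a))
        rw [Quotient.map_mk, Quotient.map_mk, Quotient.map_mk, mul_smul]) }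

/-- A system of pairwise disjoint non-trivial subacts of an `S`-act. -/
def IsSystem (A : SAct S) (Sys : Set (Set A.carrier)) : Prop :=
  (∀ B ∈ Sys, IsSubact A B ∧ ¬ B.Subsingleton) ∧
    (∀ B ∈ Sys, ∀ C ∈ Sys, B ≠ C → ∀ a ∈ B, a ∉ C)

/-- The Rees congruence determined by a system of pairwise disjoint
non-trivial subacts: `a` and `b` are related iff `a = b` or `a` and `b`
lie in a common member of the system. -/
def reesSetoid (A : SAct S) (Sys : Set (Set A.carrier)) (hSys : IsSystem A Sys) :
    Setoid A.carrier where
  r a b := a = b ∨ ∃ B ∈ Sys, a ∈ B ∧ b ∈ B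
  iseqv :=
    { refl := fun _ => Or.inl rfl
      symm := by
        rintro a b (rfl | ⟨B, hB, ha, hb⟩)
        · exact Or.inl rfl
        · exact Or.inr ⟨B, hB, hb, ha⟩
      trans := by
        rintro a b c (rfl | ⟨B, hB, ha, hb⟩) h2
        · exact h2
        · rcases h2 with rfl | ⟨C, hC, hb', hc⟩
          · exact Or.inr ⟨B, hB, ha, hb⟩
          · by_cases hBC : B = C
            · exact Or.inr ⟨B, hB, ha, hBC ▸ hc⟩
            · exact absurd hb' (hSys.2 B hB C hC hBC b hb) }

/-- A Rees congruence is a congruence. -/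
theorem reesSetoid_isActCon (A : SAct S) (Sys : Set (Set A.carrier)) (hSys : IsSystem A Sys) :
    IsActCon A (reesSetoid A Sys hSys) := by
  rintro s a a' (rfl | ⟨B, hB, ha, ha'⟩)
  · exact Or.inl rfl
  · exact Or.inr ⟨B, hB, (hSys.1 B hB).1 s a ha, (hSys.1 B hB).1 s a' ha'⟩

/-- The system of non-singleton classes of a congruence (for a Rees congruence,
this is its system `Σ_ρ` of non-trivial subacts). -/
def nsClasses (A : SAct S) (ρ : Setoid A.carrier) : Set (Set A.carrier) :=
  {C | (∃ a, C = {x | ρ x a}) ∧ ¬ C.Subsingleton}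

/-- A congruence is a Rees congruence if it arises from a system of pairwise
disjoint non-trivial subacts. -/
def IsRees (A : SAct S) (ρ : Setoid A.carrier) : Prop :=
  ∃ (Sys : Set (Set A.carrier)) (hSys : IsSystem A Sys), ρ = reesSetoid A Sys hSys

end SAct

open SAct

/-- A (normal) Hoehnke radical: an assignment of a congruence `rad A` to every
`S`-act `A`, functorial with respect to homomorphisms, and with
`rad (A / rad A) = Δ`. -/
structure HoehnkeRadical (S : Type u) [Monoid S] where
  rad : (A : SAct S) → Setoid A.carrier
  isCon : ∀ A : SAct S, IsActCon A (rad A)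
  functorial : ∀ {A B : SAct S} (f : A.carrier → B.carrier), IsHom A B f →
    ∀ a a' : A.carrier, rad A a a' → rad B (f a) (f a')
  rad_quot : ∀ A : SAct S, rad (A.quot (rad A) (isCon A)) = ⊥

namespace HoehnkeRadical

variable {S : Type u} [Monoid S]

/-- The radical class `R_r = {A : r(A) = ∇_A}` of a Hoehnke radical. -/
def radClass (r : HoehnkeRadical S) : Set (SAct S) := {A | r.rad A = ⊤}

/-- The semisimple class `S_r = {A : r(A) = Δ_A}` of a Hoehnke radical. -/
def ssClass (r : HoehnkeRadical S) : Set (SAct S) := {A | r.rad A = ⊥}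

/-- The pointwise order on Hoehnke radicals. -/
def le (r r' : HoehnkeRadical S) : Prop := ∀ A : SAct S, r.rad A ≤ r'.rad A

end HoehnkeRadical

/-- A Kurosh-Amitsur radical: a Hoehnke radical such that (i) every `rad A` is a
Rees congruence, (ii) every member of `Σ_{rad A}` is in the radical class, and
(iii) every system of pairwise disjoint non-trivial subacts belonging to the
radical class is below `Σ_{rad A}`. -/
structure KARadical (S : Type u) [Monoid S] extends HoehnkeRadical S where
  rees : ∀ A : SAct S, IsRees A (rad A)
  cls_rad : ∀ A : SAct S, ∀ B ∈ nsClasses A (rad A), ∀ h : IsSubact A B,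
    A.sub B h ∈ toHoehnkeRadical.radClass
  maximal : ∀ (A : SAct S) (Sys : Set (Set A.carrier)), IsSystem A Sys →
    (∀ B ∈ Sys, ∀ h : IsSubact A B, A.sub B h ∈ toHoehnkeRadical.radClass) →
    ∀ B ∈ Sys, ∃ C ∈ nsClasses A (rad A), B ⊆ C

/-- A torsion theory: a pair `(T, F)` of classes of `S`-acts, each closed under
isomorphism and containing all trivial acts, such that (1) every homomorphism
from a member of `T` to a member of `F` is trivial, (2) `T` contains every act
all of whose homomorphisms into members of `F` are trivial, and (3) `F`
contains every act all of whose homomorphisms from members of `T` are trivial. -/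
structure IsTorsionTheory {S : Type u} [Monoid S] (T F : Set (SAct S)) : Prop where
  iso_T : ∀ A B : SAct S, AreIso A B → A ∈ T → B ∈ T
  iso_F : ∀ A B : SAct S, AreIso A B → A ∈ F → B ∈ F
  trivial_T : ∀ A : SAct S, Subsingleton A.carrier → A ∈ T
  trivial_F : ∀ A : SAct S, Subsingleton A.carrier → A ∈ F
  hom_trivial : ∀ A ∈ T, ∀ B ∈ F, ∀ f : A.carrier → B.carrier,
    IsHom A B f → IsTrivialHom (A := A) (B := B) f
  mem_T : ∀ A : SAct S,
    (∀ B ∈ F, ∀ f : A.carrier → B.carrier, IsHom A B f → IsTrivialHom (A := A) (B := B) f) →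
    A ∈ T
  mem_F : ∀ B : SAct S,
    (∀ A ∈ T, ∀ f : A.carrier → B.carrier, IsHom A B f → IsTrivialHom (A := A) (B := B) f) →
    B ∈ F

/-- The product of a family of `S`-acts. -/
def prodAct {S : Type u} [Monoid S] (ι : Type u) (f : ι → SAct S) : SAct S where
  carrier := ∀ i, (f i).carrier
  mulAction := inferInstance

/-- The Hoehnke radical `r_C` determined by a class `C` closed under subacts and
products: the meet of all congruences whose quotient lies in `C`. -/
def radC {S : Type u} [Monoid S] (C : Set (SAct S)) (A : SAct S) : Setoid A.carrier :=
  sInf {χ : Setoid A.carrier | ∃ h : IsActCon A χ, A.quot χ h ∈ C}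

/-- The radical class `R_{r_C}` of the Hoehnke radical `r_C`. -/
def RradC {S : Type u} [Monoid S] (C : Set (SAct S)) : Set (SAct S) :=
  {A | radC C A = ⊤}

section TTConstruction

variable {S : Type u} [Monoid S]

/-- `B` is a torsion subact of `A` (w.r.t. the class `T`). -/
def TSub (T : Set (SAct S)) (A : SAct S) (B : Set A.carrier) : Prop :=
  ∃ h : IsSubact A B, A.sub B h ∈ T

/-- The radical relation: related iff equal or in a common torsion subact. -/
def ttRel (T : Set (SAct S)) (A : SAct S) (a b : A.carrier) : Prop :=
  a = b ∨ ∃ B, TSub T A B ∧ a ∈ B ∧ b ∈ B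

theorem ttRel_refl (T : Set (SAct S)) (A : SAct S) (a : A.carrier) : ttRel T A a a :=
  Or.inl rfl

theorem ttRel_symm (T : Set (SAct S)) (A : SAct S) {a b : A.carrier}
    (h : ttRel T A a b) : ttRel T A b a := by
  rcases h with rfl | ⟨B, hB, ha, hb⟩
  · exact Or.inl rfl
  · exact Or.inr ⟨B, hB, hb, ha⟩

/-- Restriction of a homomorphism on a subact to a smaller subact. -/
theorem restrict_hom {A D : SAct S} {B C : Set A.carrier} (hB : IsSubact A B)
    (hC : IsSubact A C) (hBC : B ⊆ C) (f : (A.sub C hC).carrier → D.carrier)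
    (hf : IsHom (A.sub C hC) D f) :
    IsHom (A.sub B hB) D (fun b => f ⟨b.1, hBC b.2⟩) :=
  fun s b => hf s ⟨b.1, hBC b.2⟩

/-- A homomorphism from a subact of `A` into a torsion-free act is constant on
any torsion subact contained in its domain. -/
theorem tt_const_on {T F : Set (SAct S)} (htt : IsTorsionTheory T F)
    {A D : SAct S} (hD : D ∈ F) {B C : Set A.carrier} (hB : TSub T A B)
    (hC : IsSubact A C) (hBC : B ⊆ C)
    (f : (A.sub C hC).carrier → D.carrier) (hf : IsHom (A.sub C hC) D f)
    {x y : (A.sub C hC).carrier} (hx : x.1 ∈ B) (hy : y.1 ∈ B) : f x = f y := by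
  obtain ⟨hBs, hBT⟩ := hB
  have gh := restrict_hom hBs hC hBC f hf
  have tr := htt.hom_trivial _ hBT D hD _ gh
  have h1 : f x = (fun b : (A.sub B hBs).carrier => f ⟨b.1, hBC b.2⟩) ⟨x.1, hx⟩ := by
    congr 1
  have h2 : f y = (fun b : (A.sub B hBs).carrier => f ⟨b.1, hBC b.2⟩) ⟨y.1, hy⟩ := by
    congr 1
  rw [h1, h2]
  exact tr ⟨⟨x.1, hx⟩, rfl⟩ ⟨⟨y.1, hy⟩, rfl⟩

theorem ttRel_trans {T F : Set (SAct S)} (htt : IsTorsionTheory T F) (A : SAct S)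
    {a b c : A.carrier} (h1 : ttRel T A a b) (h2 : ttRel T A b c) : ttRel T A a c := by
  rcases h1 with rfl | ⟨B, hB, haB, hbB⟩
  · exact h2
  rcases h2 with rfl | ⟨B', hB', hbB', hcB'⟩
  · exact Or.inr ⟨B, hB, haB, hbB⟩
  -- union of two torsion subacts with a common point is torsion
  have hC : IsSubact A (B ∪ B') := by
    rintro s x (hx | hx)
    · exact Or.inl (hB.1 s x hx)
    · exact Or.inr (hB'.1 s x hx)
  have hCT : TSub T A (B ∪ B') := by
    refine ⟨hC, htt.mem_T _ ?_⟩
    intro D hD f hf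
    have key : ∀ x : (A.sub (B ∪ B') hC).carrier,
        f x = f ⟨b, Or.inl hbB⟩ := by
      intro x
      rcases x.2 with hx | hx
      · exact tt_const_on htt hD hB hC Set.subset_union_left f hf hx hbB
      · have : f x = f ⟨b, Or.inr hbB'⟩ :=
          tt_const_on htt hD hB' hC Set.subset_union_right f hf hx hbB'
        rw [this]
    rintro _ ⟨x, rfl⟩ _ ⟨y, rfl⟩
    rw [key x, key y]
  exact Or.inr ⟨B ∪ B', hCT, Or.inl haB, Or.inr hcB'⟩

/-- The radical congruence of the torsion theory. -/
def ttSetoid {T F : Set (SAct S)} (htt : IsTorsionTheory T F) (A : SAct S) :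
    Setoid A.carrier where
  r := ttRel T A
  iseqv :=
    { refl := ttRel_refl T A
      symm := ttRel_symm T A
      trans := ttRel_trans htt A }

theorem ttSetoid_isActCon {T F : Set (SAct S)} (htt : IsTorsionTheory T F) (A : SAct S) :
    IsActCon A (ttSetoid htt A) := by
  rintro s a b (rfl | ⟨K, hK, ha, hb⟩)
  · exact Or.inl rfl
  · exact Or.inr ⟨K, hK, hK.1 s a ha, hK.1 s b hb⟩

/-- The image of a torsion subact under a homomorphism is a torsion subact. -/
theorem tsub_image {T F : Set (SAct S)} (htt : IsTorsionTheory T F)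
    {A B : SAct S} {K : Set A.carrier} (hK : TSub T A K)
    (f : A.carrier → B.carrier) (hf : IsHom A B f) : TSub T B (f '' K) := by
  obtain ⟨hKs, hKT⟩ := hK
  have hsub : IsSubact B (f '' K) := by
    rintro s _ ⟨a, ha, rfl⟩
    exact ⟨s • a, hKs s a ha, hf s a⟩
  refine ⟨hsub, htt.mem_T _ ?_⟩
  intro D hD g hg
  have hhom : IsHom (A.sub K hKs) D
      (fun k => g ⟨f k.1, ⟨k.1, k.2, rfl⟩⟩) := by
    intro s k
    have e : (⟨f ((s • k : (A.sub K hKs).carrier)).1,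
        ⟨(s • k : (A.sub K hKs).carrier).1, (s • k : (A.sub K hKs).carrier).2, rfl⟩⟩ :
          (B.sub (f '' K) hsub).carrier)
        = ⟨s • f k.1, hsub s (f k.1) ⟨k.1, k.2, rfl⟩⟩ :=
      Subtype.ext (hf s k.1)
    exact Eq.trans (congrArg g e) (hg s ⟨f k.1, ⟨k.1, k.2, rfl⟩⟩)
  have tr := htt.hom_trivial _ hKT D hD _ hhom
  rintro _ ⟨x, rfl⟩ _ ⟨y, rfl⟩
  obtain ⟨a, haK, hfa⟩ := x.2
  obtain ⟨a', haK', hfa'⟩ := y.2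
  have e1 : g x = g ⟨f a, ⟨a, haK, rfl⟩⟩ := by
    congr 1
    exact Subtype.ext hfa.symm
  have e2 : g y = g ⟨f a', ⟨a', haK', rfl⟩⟩ := by
    congr 1
    exact Subtype.ext hfa'.symm
  rw [e1, e2]
  exact tr ⟨⟨a, haK⟩, rfl⟩ ⟨⟨a', haK'⟩, rfl⟩

/-- A non-trivial class of the radical congruence is a torsion subact. -/
theorem class_tsub {T F : Set (SAct S)} (htt : IsTorsionTheory T F) (A : SAct S)
    {a : A.carrier} (hne : ¬ ({x | ttRel T A x a}).Subsingleton) :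
    TSub T A {x | ttRel T A x a} := by
  rw [Set.not_subsingleton_iff] at hne
  obtain ⟨x, hx, y, hy, hxy⟩ := hne
  -- get a torsion subact containing `a`
  have haK : ∃ K, TSub T A K ∧ a ∈ K := by
    by_cases hxa : x = a
    · subst hxa
      rcases hy with rfl | ⟨K, hK, hy1, hy2⟩
      · exact absurd rfl hxy
      · exact ⟨K, hK, hy2⟩
    · rcases hx with rfl | ⟨K, hK, hx1, hx2⟩
      · exact absurd rfl hxa
      · exact ⟨K, hK, hx2⟩
  obtain ⟨K0, hK0, haK0⟩ := haK
  have hsub : IsSubact A {x | ttRel T A x a} := by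
    intro s z hz
    rcases hz with rfl | ⟨K, hK, hz1, hz2⟩
    · exact Or.inr ⟨K0, hK0, hK0.1 s z haK0, haK0⟩
    · exact Or.inr ⟨K, hK, hK.1 s z hz1, hz2⟩
  refine ⟨hsub, htt.mem_T _ ?_⟩
  intro D hD f hf
  have haC : ttRel T A a a := Or.inl rfl
  have key : ∀ z : (A.sub {x | ttRel T A x a} hsub).carrier, f z = f ⟨a, haC⟩ := by
    intro z
    rcases z.2 with hz | ⟨K, hK, hz1, hz2⟩
    · have : z = ⟨a, haC⟩ := Subtype.ext hz
      rw [this]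
    · have hKsub : K ⊆ {x | ttRel T A x a} := by
        intro w hw
        exact Or.inr ⟨K, hK, hw, hz2⟩
      exact tt_const_on htt hD hK hsub hKsub f hf hz1 hz2
  rintro _ ⟨x, rfl⟩ _ ⟨y, rfl⟩
  rw [key x, key y]

theorem mk_hom (A : SAct S) (ρ : Setoid A.carrier) (h : IsActCon A ρ) :
    IsHom A (A.quot ρ h) (Quotient.mk ρ) := fun _ _ => rfl

/-- If `A ∈ T` then the whole carrier is a torsion subact. -/
theorem tsub_univ {T F : Set (SAct S)} (htt : IsTorsionTheory T F)
    {A : SAct S} (hA : A ∈ T) : TSub T A Set.univ := by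
  have hsub : IsSubact A Set.univ := fun _ _ _ => trivial
  refine ⟨hsub, htt.iso_T A _ ⟨fun a => ⟨a, trivial⟩, fun s a => rfl, ?_⟩ hA⟩
  exact ⟨fun a b hab => congrArg Subtype.val hab, fun b => ⟨b.1, Subtype.ext rfl⟩⟩

/-- Conversely if the whole carrier is a torsion subact then `A ∈ T`. -/
theorem memT_of_tsub_univ {T F : Set (SAct S)} (htt : IsTorsionTheory T F)
    {A : SAct S} (hA : TSub T A Set.univ) : A ∈ T := by
  obtain ⟨hsub, hT⟩ := hA
  refine htt.iso_T (A.sub Set.univ hsub) A ⟨Subtype.val, fun s a => rfl, ?_⟩ hT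
  exact ⟨fun a b hab => Subtype.ext hab, fun b => ⟨⟨b, trivial⟩, rfl⟩⟩

theorem top_of_memT {T F : Set (SAct S)} (htt : IsTorsionTheory T F)
    {A : SAct S} (hA : A ∈ T) : ttSetoid htt A = ⊤ := by
  apply Setoid.ext
  intro a b
  constructor
  · intro _; trivial
  · intro _
    exact Or.inr ⟨Set.univ, tsub_univ htt hA, trivial, trivial⟩

theorem memT_of_top {T F : Set (SAct S)} (htt : IsTorsionTheory T F)
    {A : SAct S} (hA : ttSetoid htt A = ⊤) : A ∈ T := by
  by_cases hss : Subsingleton A.carrier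
  · exact htt.trivial_T A hss
  · rw [not_subsingleton_iff_nontrivial] at hss
    obtain ⟨a, b, hab⟩ := hss
    have hclass : {x | ttRel T A x a} = Set.univ := by
      apply Set.eq_univ_of_forall
      intro x
      have : ttSetoid htt A x a := by rw [hA]; trivial
      exact this
    have hne : ¬ ({x | ttRel T A x a}).Subsingleton := by
      rw [hclass]
      intro hsub
      exact hab (hsub trivial trivial)
    have := class_tsub htt A hne
    rw [hclass] at this
    exact memT_of_tsub_univ htt this

theorem bot_of_memF {T F : Set (SAct S)} (htt : IsTorsionTheory T F)
    {A : SAct S} (hA : A ∈ F) : ttSetoid htt A = ⊥ := by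
  apply Setoid.ext
  intro a b
  constructor
  · rintro (rfl | ⟨K, ⟨hKs, hKT⟩, ha, hb⟩)
    · rfl
    · have hv : IsHom (A.sub K hKs) A Subtype.val := fun s a => rfl
      have tr := htt.hom_trivial _ hKT A hA _ hv
      exact tr ⟨⟨a, ha⟩, rfl⟩ ⟨⟨b, hb⟩, rfl⟩
  · rintro rfl
    exact Or.inl rfl

theorem memF_of_bot {T F : Set (SAct S)} (htt : IsTorsionTheory T F)
    {A : SAct S} (hA : ttSetoid htt A = ⊥) : A ∈ F := by
  refine htt.mem_F A ?_
  intro K hK f hf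
  have himg := tsub_image htt (tsub_univ htt hK) f hf
  rintro _ ⟨x, rfl⟩ _ ⟨y, rfl⟩
  have : ttSetoid htt A (f x) (f y) :=
    Or.inr ⟨f '' Set.univ, himg, ⟨x, trivial, rfl⟩, ⟨y, trivial, rfl⟩⟩
  rw [hA] at this
  exact this

/-- Key lemma: the quotient by the radical congruence has trivial radical. -/
theorem tt_rad_quot {T F : Set (SAct S)} (htt : IsTorsionTheory T F) (A : SAct S) :
    ttSetoid htt (A.quot (ttSetoid htt A) (ttSetoid_isActCon htt A)) = ⊥ := by
  set ρ := ttSetoid htt A with hρ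
  set Q := A.quot ρ (ttSetoid_isActCon htt A) with hQ
  apply Setoid.ext
  intro q1 q2
  constructor
  · rintro (rfl | ⟨K, ⟨hKs, hKT⟩, h1, h2⟩)
    · rfl
    · -- the preimage of K in A is a torsion subact
      set P : Set A.carrier := (Quotient.mk ρ) ⁻¹' K with hP
      have hPsub : IsSubact A P := by
        intro s x hx
        show Quotient.mk ρ (s • x) ∈ K
        rw [mk_hom A ρ (ttSetoid_isActCon htt A) s x]
        exact hKs s _ hx
      have hfconst : ∀ (D : SAct S), D ∈ F →
          ∀ (f : (A.sub P hPsub).carrier → D.carrier), IsHom (A.sub P hPsub) D f →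
          ∀ x y : (A.sub P hPsub).carrier, ρ x.1 y.1 → f x = f y := by
        intro D hD f hf x y hxy
        rcases hxy with h | ⟨K', hK', hx', hy'⟩
        · have : x = y := Subtype.ext h
          rw [this]
        · have hK'P : K' ⊆ P := by
            intro z hz
            have hzx : ρ z x.1 := Or.inr ⟨K', hK', hz, hx'⟩
            show Quotient.mk ρ z ∈ K
            have : Quotient.mk ρ z = Quotient.mk ρ x.1 := Quotient.sound hzx
            rw [this]
            exact x.2
          exact tt_const_on htt hD hK' hPsub hK'P f hf hx' hy'
      have hPT : TSub T A P := by
        refine ⟨hPsub, htt.mem_T _ ?_⟩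
        intro D hD f hf
        -- define g on K ⊆ Q using representatives
        have hout : ∀ q : (Q.sub K hKs).carrier, (q.1 : Quotient ρ).out ∈ P := by
          intro q
          show Quotient.mk ρ (q.1 : Quotient ρ).out ∈ K
          have e : (Quotient.mk ρ (q.1 : Quotient ρ).out : Q.carrier) = q.1 := Quotient.out_eq _
          exact (congrArg (· ∈ K) e).mpr q.2
        set g : (Q.sub K hKs).carrier → D.carrier :=
          fun q => f ⟨(q.1 : Quotient ρ).out, hout q⟩ with hg
        have hghom : IsHom (Q.sub K hKs) D g := by
          intro s q
          show f ⟨((s • q : (Q.sub K hKs).carrier).1 : Quotient ρ).out, _⟩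
              = s • f ⟨(q.1 : Quotient ρ).out, hout q⟩
          rw [← hf s ⟨(q.1 : Quotient ρ).out, hout q⟩]
          apply hfconst D hD f hf
          apply Quotient.exact (s := ρ)
          show Quotient.mk ρ ((s • q : (Q.sub K hKs).carrier).1 : Quotient ρ).out
              = Quotient.mk ρ (s • (q.1 : Quotient ρ).out)
          have e1 : (Quotient.mk ρ ((s • q : (Q.sub K hKs).carrier).1 : Quotient ρ).out : Q.carrier)
              = (s • q : (Q.sub K hKs).carrier).1 := Quotient.out_eq _
          have e2 : (Quotient.mk ρ (q.1 : Quotient ρ).out : Q.carrier) = q.1 := Quotient.out_eq _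
          exact e1.trans ((congrArg (fun z : Q.carrier => s • z) e2).symm.trans
            (mk_hom A ρ (ttSetoid_isActCon htt A) s (q.1 : Quotient ρ).out).symm)
        have tr := htt.hom_trivial _ hKT D hD g hghom
        have key : ∀ x : (A.sub P hPsub).carrier,
            f x = g ⟨Quotient.mk ρ x.1, x.2⟩ := by
          intro x
          show f x = f ⟨(Quotient.mk ρ x.1).out, _⟩
          apply hfconst D hD f hf
          apply Quotient.exact (s := ρ)
          show Quotient.mk ρ x.1 = Quotient.mk ρ (Quotient.mk ρ x.1).out
          rw [Quotient.out_eq]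
        rintro _ ⟨x, rfl⟩ _ ⟨y, rfl⟩
        rw [key x, key y]
        exact tr ⟨_, rfl⟩ ⟨_, rfl⟩
      -- now conclude q1 = q2
      obtain ⟨x, hx⟩ := Quotient.exists_rep q1
      obtain ⟨y, hy⟩ := Quotient.exists_rep q2
      have hxP : x ∈ P := by show Quotient.mk ρ x ∈ K; rw [show Quotient.mk ρ x = q1 from hx]; exact h1
      have hyP : y ∈ P := by show Quotient.mk ρ y ∈ K; rw [show Quotient.mk ρ y = q2 from hy]; exact h2
      have : ρ x y := Or.inr ⟨P, hPT, hxP, hyP⟩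
      rw [← hx, ← hy]
      exact Quotient.sound this
  · rintro rfl
    exact Or.inl rfl

end TTConstruction

theorem torsion_theory_gives_KA_radical (S : Type u) [Monoid S]
    (T F : Set (SAct S)) (htt : IsTorsionTheory T F) :
    ∃ r : KARadical S,
      r.toHoehnkeRadical.radClass = T ∧ r.toHoehnkeRadical.ssClass = F := by
  -- the Hoehnke radical
  refine ⟨⟨⟨ttSetoid htt, ttSetoid_isActCon htt, ?_, tt_rad_quot htt⟩, ?_, ?_, ?_⟩, ?_, ?_⟩
  · -- functorial
    rintro A B f hf a a' (rfl | ⟨K, hK, ha, ha'⟩)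
    · exact Or.inl rfl
    · exact Or.inr ⟨f '' K, tsub_image htt hK f hf, ⟨a, ha, rfl⟩, ⟨a', ha', rfl⟩⟩
  · -- rees
    intro A
    have hSys : IsSystem A (nsClasses A (ttSetoid htt A)) := by
      constructor
      · rintro B ⟨⟨a, rfl⟩, hns⟩
        exact ⟨(class_tsub htt A hns).1, hns⟩
      · rintro B ⟨⟨a, rfl⟩, hnsB⟩ C ⟨⟨c, rfl⟩, hnsC⟩ hBC x hxB hxC
        apply hBC
        ext z
        simp only [Set.mem_setOf_eq]
        constructor
        · intro hza
          exact ttRel_trans htt A hza (ttRel_trans htt A (ttRel_symm T A hxB) hxC)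
        · intro hzc
          exact ttRel_trans htt A hzc (ttRel_trans htt A (ttRel_symm T A hxC) hxB)
    refine ⟨nsClasses A (ttSetoid htt A), hSys, ?_⟩
    apply Setoid.ext
    intro a b
    show ttRel T A a b ↔ _
    constructor
    · intro hab
      by_cases heq : a = b
      · exact Or.inl heq
      · refine Or.inr ⟨{x | ttRel T A x b}, ⟨⟨b, rfl⟩, ?_⟩, hab, Or.inl rfl⟩
        intro hsub
        exact heq (hsub hab (Or.inl rfl))
    · rintro (rfl | ⟨C, ⟨⟨c, rfl⟩, _⟩, haC, hbC⟩)
      · exact Or.inl rfl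
      · exact ttRel_trans htt A haC (ttRel_symm T A hbC)
  · -- cls_rad
    rintro A B ⟨⟨a, rfl⟩, hns⟩ h
    obtain ⟨h', hT⟩ := class_tsub htt A hns
    show ttSetoid htt _ = ⊤
    exact top_of_memT htt hT
  · -- maximal
    intro A Sys hSys hrad B hB
    obtain ⟨hBsub, hBns⟩ := hSys.1 B hB
    have hBT : A.sub B hBsub ∈ T := memT_of_top htt (hrad B hB hBsub)
    have hBts : TSub T A B := ⟨hBsub, hBT⟩
    rw [Set.not_subsingleton_iff] at hBns
    obtain ⟨a, haB, b, hbB, hab⟩ := hBns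
    refine ⟨{x | ttRel T A x a}, ⟨⟨a, rfl⟩, ?_⟩, ?_⟩
    · intro hsub
      exact hab (hsub (show b ∈ _ from Or.inr ⟨B, hBts, hbB, haB⟩) (Or.inl rfl)).symm
    · intro x hx
      exact Or.inr ⟨B, hBts, hx, haB⟩
  · -- radClass = T
    ext A
    exact ⟨fun h => memT_of_top htt h, fun h => top_of_memT htt h⟩
  · -- ssClass = F
    ext A
    exact ⟨fun h => memF_of_bot htt h, fun h => bot_of_memF htt h⟩
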